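/- Let T > 0, δ ∈ (0,1), p ∈ (1,∞) with δ > 1/p. Let f ∈ C([0,T];ℝ) be a continuous function. Then the mixed Hölder-variation seminorm dominates the Riesz type variation and is dominated by it: ‖f‖_{V^{δ,p}} ≤ ‖f‖_{\tilde V^{δ,p}} ≤ ‖f‖_{V^{δ,p}}·C for some constant C depending only on δ and p, where the second inequality follows by combining |f|_{(1/δ)-var;[u,v]}^p ≤ ‖f‖_{V^{δ,p};[u,v]}^p |v-u|^{δp-1} with super-additivity of (u,v) ↦ ‖f‖_{V^{δ,p};[u,v]}^p. -/

import Mathlib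

open scoped ENNReal NNReal
open MeasureTheory

/-- `u 0, u 1, ..., u n` are the points of a partition of `[s,t]`. -/
def IsPart (s t : ℝ) (n : ℕ) (u : ℕ → ℝ) : Prop :=
  u 0 = s ∧ u n = t ∧ ∀ i < n, u i < u (i + 1)

/-- Riesz-type sum of `f` along a partition, with parameters `δ, p`. -/
noncomputable def rieszSum {E : Type*} [PseudoEMetricSpace E] (f : ℝ → E) (δ p : ℝ)
    (n : ℕ) (u : ℕ → ℝ) : ℝ≥0∞ :=
  ∑ i ∈ Finset.range n,
    edist (f (u i)) (f (u (i + 1))) ^ p / ENNReal.ofReal (u (i + 1) - u i) ^ (δ * p - 1)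

/-- Riesz type variation seminorm `‖f‖_{V^{δ,p};[s,t]}`. -/
noncomputable def VNorm {E : Type*} [PseudoEMetricSpace E] (f : ℝ → E) (δ p : ℝ)
    (s t : ℝ) : ℝ≥0∞ :=
  (⨆ n, ⨆ u, ⨆ _ : IsPart s t n u, rieszSum f δ p n u) ^ (1 / p)

/-- `q`-variation seminorm `‖f‖_{q-var;[s,t]}`. -/
noncomputable def qVar {E : Type*} [PseudoEMetricSpace E] (f : ℝ → E) (q : ℝ)
    (s t : ℝ) : ℝ≥0∞ :=
  (⨆ n, ⨆ u, ⨆ _ : IsPart s t n u,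
    ∑ i ∈ Finset.range n, edist (f (u i)) (f (u (i + 1))) ^ q) ^ (1 / q)

/-- `δ`-Hölder seminorm on `[s,t]`, i.e. `‖f‖_{V^{δ,∞};[s,t]}`. -/
noncomputable def holNorm {E : Type*} [PseudoEMetricSpace E] (f : ℝ → E) (δ : ℝ)
    (s t : ℝ) : ℝ≥0∞ :=
  ⨆ u, ⨆ v, ⨆ _ : s ≤ u ∧ u < v ∧ v ≤ t,
    edist (f u) (f v) / ENNReal.ofReal (v - u) ^ δ

/-- Nikolskii seminorm `‖f‖_{N^{δ,p};[s,t]}`. -/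
noncomputable def nikNorm {E : Type*} [PseudoEMetricSpace E] (f : ℝ → E) (δ p : ℝ)
    (s t : ℝ) : ℝ≥0∞ :=
  ⨆ h : ℝ, ⨆ _ : 0 < h ∧ h ≤ t - s,
    ENNReal.ofReal h ^ (-δ) *
      (∫⁻ r in Set.Ioc s (t - h), edist (f r) (f (r + h)) ^ p) ^ (1 / p)

/-- Refined Nikolskii seminorm `‖f‖_{\hat N^{δ,p};[s,t]}`. -/
noncomputable def nikHatNorm {E : Type*} [PseudoEMetricSpace E] (f : ℝ → E) (δ p : ℝ)
    (s t : ℝ) : ℝ≥0∞ :=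
  (⨆ n, ⨆ u, ⨆ _ : IsPart s t n u,
    ∑ i ∈ Finset.range n, nikNorm f δ p (u i) (u (i + 1)) ^ p) ^ (1 / p)

/-- Mixed Hölder-variation seminorm `‖f‖_{\tilde V^{δ,p};[s,t]}`. -/
noncomputable def tildeVNorm {E : Type*} [PseudoEMetricSpace E] (f : ℝ → E) (δ p : ℝ)
    (s t : ℝ) : ℝ≥0∞ :=
  (⨆ n, ⨆ u, ⨆ _ : IsPart s t n u,
    ∑ i ∈ Finset.range n,
      qVar f (1 / δ) (u i) (u (i + 1)) ^ p
        / ENNReal.ofReal (u (i + 1) - u i) ^ (δ * p - 1)) ^ (1 / p)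

/-- Fractional Sobolev (Sobolev–Slobodeckij) seminorm `‖f‖_{W^{δ,p};[s,t]}`. -/
noncomputable def sobNorm {E : Type*} [PseudoEMetricSpace E] (f : ℝ → E) (δ p : ℝ)
    (s t : ℝ) : ℝ≥0∞ :=
  (∫⁻ v in Set.Ioc s t, ∫⁻ u in Set.Ioc s t,
    edist (f u) (f v) ^ p / ENNReal.ofReal |v - u| ^ (1 + δ * p)) ^ (1 / p)

noncomputable def Sv {E : Type*} [PseudoEMetricSpace E] (f : ℝ → E) (δ p : ℝ)
    (s t : ℝ) : ℝ≥0∞ :=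
  ⨆ n, ⨆ u, ⨆ _ : IsPart s t n u, rieszSum f δ p n u

section aux
variable {E : Type*} [PseudoEMetricSpace E] {f : ℝ → E} {δ p s m t : ℝ}

lemma isPart_mono {n : ℕ} {u : ℕ → ℝ} (h : ∀ i < n, u i < u (i + 1)) :
    ∀ {i j : ℕ}, i ≤ j → j ≤ n → u i ≤ u j := by
  intro i j hij hj
  induction j with
  | zero => simp_all
  | succ k ih =>
    rcases Nat.eq_or_lt_of_le hij with rfl | h2
    · exact le_refl _
    · exact le_trans (ih (Nat.lt_succ_iff.mp h2) (le_trans (Nat.le_succ k) hj))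
        (h k (by omega)).le

lemma isPart_self (s : ℝ) : IsPart s s 0 (fun _ => s) := ⟨rfl, rfl, by omega⟩

lemma isPart_two (h : s < t) : IsPart s t 1 (fun i => if i = 0 then s else t) :=
  ⟨rfl, rfl, fun i hi => by simp [Nat.lt_one_iff.mp hi, h]⟩

lemma le_Sv {n : ℕ} {u : ℕ → ℝ} (h : IsPart s t n u) :
    rieszSum f δ p n u ≤ Sv f δ p s t :=
  le_iSup_of_le n <| le_iSup_of_le u <| le_iSup_of_le h le_rfl

lemma Sv_eq (f : ℝ → E) (δ p s t : ℝ) :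
    Sv f δ p s t
      = ⨆ q : {q : ℕ × (ℕ → ℝ) // IsPart s t q.1 q.2}, rieszSum f δ p q.1.1 q.1.2 := by
  rw [iSup_subtype, Sv, iSup_prod]

lemma sum_range_add' (g : ℕ → ℝ≥0∞) (a b : ℕ) :
    ∑ i ∈ Finset.range (a + b), g i
      = (∑ i ∈ Finset.range a, g i) + ∑ i ∈ Finset.range b, g (a + i) := by
  induction b with
  | zero => simp
  | succ k ih => rw [← Nat.add_assoc, Finset.sum_range_succ, ih, Finset.sum_range_succ, add_assoc]

lemma concat (f : ℝ → E) (δ p : ℝ) {s m t : ℝ} {n₁ n₂ : ℕ} {u v : ℕ → ℝ}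
    (h1 : IsPart s m n₁ u) (h2 : IsPart m t n₂ v) :
    IsPart s t (n₁ + n₂) (fun j => if j < n₁ then u j else v (j - n₁)) ∧
    rieszSum f δ p (n₁ + n₂) (fun j => if j < n₁ then u j else v (j - n₁)) =
      rieszSum f δ p n₁ u + rieszSum f δ p n₂ v := by
  obtain ⟨hu0, hun, hui⟩ := h1
  obtain ⟨hv0, hvn, hvi⟩ := h2
  set w : ℕ → ℝ := fun j => if j < n₁ then u j else v (j - n₁) with hw
  have hwu : ∀ j ≤ n₁, w j = u j := by
    intro j hj
    rcases lt_or_eq_of_le hj with h | rfl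
    · simp [hw, h]
    · simp [hw, hv0, hun]
  have hwv : ∀ j, w (n₁ + j) = v j := by
    intro j
    simp [hw, Nat.add_sub_cancel_left]
  have hpart : IsPart s t (n₁ + n₂) w := by
    refine ⟨by rw [hwu 0 (Nat.zero_le _), hu0], by rw [hwv n₂, hvn], ?_⟩
    intro i hi
    rcases Nat.lt_or_ge i n₁ with h | h
    · rw [hwu i h.le, hwu (i + 1) h]
      exact hui i h
    · obtain ⟨j, rfl⟩ := Nat.exists_eq_add_of_le h
      rw [hwv j, show n₁ + j + 1 = n₁ + (j + 1) from rfl, hwv (j + 1)]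
      exact hvi j (by omega)
  refine ⟨hpart, ?_⟩
  unfold rieszSum
  rw [sum_range_add']
  congr 1
  · refine Finset.sum_congr rfl fun i hi => ?_
    rw [Finset.mem_range] at hi
    rw [hwu i hi.le, hwu (i + 1) hi]
  · refine Finset.sum_congr rfl fun i hi => ?_
    rw [hwv i, show n₁ + i + 1 = n₁ + (i + 1) from rfl, hwv (i + 1)]

lemma Sv_add (f : ℝ → E) (δ p : ℝ) {s m t : ℝ} (h1 : s ≤ m) (h2 : m ≤ t) :
    Sv f δ p s m + Sv f δ p m t ≤ Sv f δ p s t := by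
  have ne1 : Nonempty {q : ℕ × (ℕ → ℝ) // IsPart s m q.1 q.2} := by
    rcases eq_or_lt_of_le h1 with rfl | h
    · exact ⟨⟨(0, fun _ => s), isPart_self s⟩⟩
    · exact ⟨⟨(1, _), isPart_two h⟩⟩
  have ne2 : Nonempty {q : ℕ × (ℕ → ℝ) // IsPart m t q.1 q.2} := by
    rcases eq_or_lt_of_le h2 with rfl | h
    · exact ⟨⟨(0, fun _ => m), isPart_self m⟩⟩
    · exact ⟨⟨(1, _), isPart_two h⟩⟩
  rw [Sv_eq f δ p s m, Sv_eq f δ p m t]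
  refine ENNReal.iSup_add_iSup_le fun q r => ?_
  obtain ⟨hpart, heq⟩ := concat f δ p q.2 r.2
  rw [← heq]
  exact le_Sv hpart

lemma sum_Sv_le (f : ℝ → E) (δ p : ℝ) :
    ∀ {n : ℕ} {s t : ℝ} {u : ℕ → ℝ}, IsPart s t n u →
      ∑ i ∈ Finset.range n, Sv f δ p (u i) (u (i + 1)) ≤ Sv f δ p s t := by
  intro n
  induction n with
  | zero => simp
  | succ k ih =>
    intro s t u h
    obtain ⟨h0, hn, hs⟩ := h
    have h1 : IsPart s (u k) k u := ⟨h0, rfl, fun i hi => hs i (by omega)⟩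
    rw [Finset.sum_range_succ]
    calc ∑ i ∈ Finset.range k, Sv f δ p (u i) (u (i + 1)) + Sv f δ p (u k) (u (k + 1))
        ≤ Sv f δ p s (u k) + Sv f δ p (u k) (u (k + 1)) := add_le_add (ih h1) le_rfl
      _ ≤ Sv f δ p s t := by
          rw [← hn]
          refine Sv_add f δ p ?_ (hs k (by omega)).le
          rw [← h0]
          exact isPart_mono hs (Nat.zero_le k) (Nat.le_succ k)
lemma edist_le_qVar (f : ℝ → E) (hδ : 0 < δ) {a b : ℝ} (hab : a < b) :
    edist (f a) (f b) ≤ qVar f (1 / δ) a b := by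
  rw [qVar, one_div_one_div]
  have h1 : edist (f a) (f b) ^ (1 / δ)
      ≤ ⨆ n, ⨆ u, ⨆ _ : IsPart a b n u,
          ∑ i ∈ Finset.range n, edist (f (u i)) (f (u (i + 1))) ^ (1 / δ) :=
    le_iSup_of_le 1 <| le_iSup_of_le (fun i => if i = 0 then a else b) <|
      le_iSup_of_le (isPart_two hab) <| by simp
  calc edist (f a) (f b) = (edist (f a) (f b) ^ (1 / δ)) ^ δ := by
        rw [← ENNReal.rpow_mul, one_div, inv_mul_cancel₀ hδ.ne', ENNReal.rpow_one]
    _ ≤ _ := ENNReal.rpow_le_rpow h1 hδ.le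

lemma qVar_pow_le (f : ℝ → E) (hδ : 0 < δ) (hp : 0 < p) (hr : 1 < δ * p)
    {a b : ℝ} (hab : a < b) :
    qVar f (1 / δ) a b ^ p ≤ Sv f δ p a b * ENNReal.ofReal (b - a) ^ (δ * p - 1) := by
  have hr0 : δ * p ≠ 0 := by positivity
  have hr1 : δ * p - 1 ≠ 0 := by linarith
  have hconj : (δ * p).HolderConjugate ((δ * p) / (δ * p - 1)) :=
    Real.HolderConjugate.conjExponent hr
  have key : ∀ (n : ℕ) (w : ℕ → ℝ), IsPart a b n w →
      ∑ i ∈ Finset.range n, edist (f (w i)) (f (w (i + 1))) ^ (1 / δ)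
        ≤ (Sv f δ p a b * ENNReal.ofReal (b - a) ^ (δ * p - 1)) ^ (1 / (δ * p)) := by
    intro n w hw
    set e : ℕ → ℝ≥0∞ := fun i => edist (f (w i)) (f (w (i + 1))) with he
    set D : ℕ → ℝ≥0∞ := fun i => ENNReal.ofReal (w (i + 1) - w i) with hD
    have hD0 : ∀ i < n, D i ≠ 0 := fun i hi => by
      simp only [hD, ne_eq, ENNReal.ofReal_eq_zero, not_le]
      linarith [hw.2.2 i hi]
    have hDt : ∀ i, D i ≠ ∞ := fun i => ENNReal.ofReal_ne_top
    have hcexp : 0 ≤ (δ * p - 1) / (δ * p) := div_nonneg (by linarith) (by positivity)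
    have step : ∀ i ∈ Finset.range n, e i ^ (1 / δ)
        = (e i ^ p / D i ^ (δ * p - 1)) ^ (1 / (δ * p)) * D i ^ ((δ * p - 1) / (δ * p)) := by
      intro i hi
      rw [Finset.mem_range] at hi
      rw [ENNReal.div_rpow_of_nonneg _ _ (by positivity), ← ENNReal.rpow_mul,
        ← ENNReal.rpow_mul]
      have e1 : p * (1 / (δ * p)) = 1 / δ := by field_simp
      have e2 : (δ * p - 1) * (1 / (δ * p)) = (δ * p - 1) / (δ * p) := by ring
      rw [e1, e2]
      have hDpos : 0 < D i := pos_iff_ne_zero.mpr (hD0 i hi)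
      exact (ENNReal.div_mul_cancel (ENNReal.rpow_pos hDpos (hDt i)).ne'
        (ENNReal.rpow_ne_top_of_nonneg hcexp (hDt i))).symm
    have hsumD : ∑ i ∈ Finset.range n, D i = ENNReal.ofReal (b - a) := by
      simp only [hD]
      rw [← ENNReal.ofReal_sum_of_nonneg
        (fun i hi => by linarith [hw.2.2 i (Finset.mem_range.mp hi)]),
        Finset.sum_range_sub w, hw.1, hw.2.1]
    have hA : ∑ i ∈ Finset.range n,
        ((e i ^ p / D i ^ (δ * p - 1)) ^ (1 / (δ * p))) ^ (δ * p)
          = rieszSum f δ p n w := by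
      refine Finset.sum_congr rfl fun i _ => ?_
      rw [← ENNReal.rpow_mul, one_div, inv_mul_cancel₀ hr0, ENNReal.rpow_one]
    have hB : ∑ i ∈ Finset.range n,
        (D i ^ ((δ * p - 1) / (δ * p))) ^ (δ * p / (δ * p - 1))
          = ENNReal.ofReal (b - a) := by
      rw [← hsumD]
      refine Finset.sum_congr rfl fun i _ => ?_
      rw [← ENNReal.rpow_mul]
      have : (δ * p - 1) / (δ * p) * (δ * p / (δ * p - 1)) = 1 := by field_simp
      rw [this, ENNReal.rpow_one]
    calc ∑ i ∈ Finset.range n, e i ^ (1 / δ)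
        = ∑ i ∈ Finset.range n,
            (e i ^ p / D i ^ (δ * p - 1)) ^ (1 / (δ * p)) * D i ^ ((δ * p - 1) / (δ * p)) :=
          Finset.sum_congr rfl step
      _ ≤ (∑ i ∈ Finset.range n,
            ((e i ^ p / D i ^ (δ * p - 1)) ^ (1 / (δ * p))) ^ (δ * p)) ^ (1 / (δ * p)) *
          (∑ i ∈ Finset.range n,
            (D i ^ ((δ * p - 1) / (δ * p))) ^ (δ * p / (δ * p - 1))) ^ (1 / (δ * p / (δ * p - 1))) :=
          ENNReal.inner_le_Lp_mul_Lq _ _ _ hconj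
      _ = (rieszSum f δ p n w) ^ (1 / (δ * p)) *
            (ENNReal.ofReal (b - a)) ^ ((δ * p - 1) / (δ * p)) := by
          rw [hA, hB, one_div_div]
      _ ≤ (Sv f δ p a b) ^ (1 / (δ * p)) *
            (ENNReal.ofReal (b - a)) ^ ((δ * p - 1) / (δ * p)) :=
          mul_le_mul_left (ENNReal.rpow_le_rpow (le_Sv hw) (by positivity)) _
      _ = (Sv f δ p a b * ENNReal.ofReal (b - a) ^ (δ * p - 1)) ^ (1 / (δ * p)) := by
          rw [ENNReal.mul_rpow_of_nonneg _ _ (by positivity), ← ENNReal.rpow_mul]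
          congr 1
          ring
  rw [qVar, one_div_one_div, ← ENNReal.rpow_mul]
  have hsup : (⨆ n, ⨆ u, ⨆ _ : IsPart a b n u,
      ∑ i ∈ Finset.range n, edist (f (u i)) (f (u (i + 1))) ^ (1 / δ))
        ≤ (Sv f δ p a b * ENNReal.ofReal (b - a) ^ (δ * p - 1)) ^ (1 / (δ * p)) :=
    iSup_le fun n => iSup_le fun u => iSup_le fun h => key n u h
  calc (⨆ n, ⨆ u, ⨆ _ : IsPart a b n u,
        ∑ i ∈ Finset.range n, edist (f (u i)) (f (u (i + 1))) ^ (1 / δ)) ^ (δ * p)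
      ≤ ((Sv f δ p a b * ENNReal.ofReal (b - a) ^ (δ * p - 1)) ^ (1 / (δ * p))) ^ (δ * p) :=
        ENNReal.rpow_le_rpow hsup (by positivity)
    _ = Sv f δ p a b * ENNReal.ofReal (b - a) ^ (δ * p - 1) := by
        rw [← ENNReal.rpow_mul, one_div, inv_mul_cancel₀ hr0, ENNReal.rpow_one]
end aux

/-- `‖f‖_{V^{δ,p}} ≤ ‖f‖_{\tilde V^{δ,p}} ≤ C ‖f‖_{V^{δ,p}}`
for real-valued continuous paths. -/
theorem VNorm_le_tildeVNorm_le (δ p : ℝ)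
    (hδ : 0 < δ) (hδ1 : δ < 1) (hp : 1 < p) (hδp : 1 / p < δ) :
    ∃ C : ℝ, 0 < C ∧ ∀ (T : ℝ) (f : ℝ → ℝ), 0 < T →
      ContinuousOn f (Set.Icc 0 T) →
      VNorm f δ p 0 T ≤ tildeVNorm f δ p 0 T ∧
      tildeVNorm f δ p 0 T ≤ VNorm f δ p 0 T * ENNReal.ofReal C := by
  have hp0 : (0:ℝ) < p := lt_trans one_pos hp
  refine ⟨1, one_pos, fun T f hT _ => ?_⟩
  have hr : 1 < δ * p := by
    rw [div_lt_iff₀ hp0] at hδp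
    linarith
  have hpinv : (0:ℝ) ≤ 1 / p := by positivity
  constructor
  · rw [VNorm, tildeVNorm]
    refine ENNReal.rpow_le_rpow ?_ hpinv
    refine iSup_le fun n => iSup_le fun u => iSup_le fun h => ?_
    refine le_iSup_of_le n <| le_iSup_of_le u <| le_iSup_of_le h ?_
    refine Finset.sum_le_sum fun i hi => ?_
    exact ENNReal.div_le_div_right
      (ENNReal.rpow_le_rpow
        (edist_le_qVar f hδ (h.2.2 i (Finset.mem_range.mp hi))) hp0.le) _
  · rw [ENNReal.ofReal_one, mul_one, VNorm, tildeVNorm]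
    refine ENNReal.rpow_le_rpow ?_ hpinv
    refine iSup_le fun n => iSup_le fun u => iSup_le fun h => ?_
    calc ∑ i ∈ Finset.range n, qVar f (1 / δ) (u i) (u (i + 1)) ^ p
          / ENNReal.ofReal (u (i + 1) - u i) ^ (δ * p - 1)
        ≤ ∑ i ∈ Finset.range n, Sv f δ p (u i) (u (i + 1)) := by
          refine Finset.sum_le_sum fun i hi => ?_
          have hlt := h.2.2 i (Finset.mem_range.mp hi)
          have hD0 : ENNReal.ofReal (u (i + 1) - u i) ^ (δ * p - 1) ≠ 0 :=
            (ENNReal.rpow_pos (ENNReal.ofReal_pos.mpr (by linarith))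
              ENNReal.ofReal_ne_top).ne'
          have hDt : ENNReal.ofReal (u (i + 1) - u i) ^ (δ * p - 1) ≠ ∞ :=
            ENNReal.rpow_ne_top_of_nonneg (by linarith) ENNReal.ofReal_ne_top
          calc qVar f (1 / δ) (u i) (u (i + 1)) ^ p
                / ENNReal.ofReal (u (i + 1) - u i) ^ (δ * p - 1)
              ≤ (Sv f δ p (u i) (u (i + 1))
                  * ENNReal.ofReal (u (i + 1) - u i) ^ (δ * p - 1))
                / ENNReal.ofReal (u (i + 1) - u i) ^ (δ * p - 1) :=
                ENNReal.div_le_div_right (qVar_pow_le f hδ hp0 hr hlt) _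
            _ = Sv f δ p (u i) (u (i + 1)) := by
                rw [mul_div_assoc, ENNReal.div_self hD0 hDt, mul_one]
      _ ≤ ⨆ n, ⨆ u, ⨆ _ : IsPart 0 T n u, rieszSum f δ p n u := sum_Sv_le f δ p h
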